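/- For π a cyclic-interval partition of {1,...,n} and ρ ∈ NC(n), one has d_H(π,ρ) = |π| + |ρ| − 2|π ∨ ρ|, where ∨ is the join in NC(n). -/

import Mathlib

/-- A partition of `{1,...,n}` (modeled as a setoid on `Fin n`) is non-crossing. -/
def IsNoncrossing {n : ℕ} (s : Setoid (Fin n)) : Prop :=
  ∀ a b c d : Fin n, a < b → b < c → c < d → s.r a c → s.r b d → s.r a b

/-- `NC n`: the set of non-crossing partitions of `{1,...,n}`, ordered by reverse
refinement (the order induced from the refinement order on setoids). -/
abbrev NC (n : ℕ) := {s : Setoid (Fin n) // IsNoncrossing s}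

/-- The number of blocks of a partition. -/
noncomputable def blocks {n : ℕ} (s : Setoid (Fin n)) : ℕ := Nat.card (Quotient s)

/-- The Hasse diagram of `NC n`: vertices are non-crossing partitions, edges join
pairs where one covers the other. -/
def hasse (n : ℕ) : SimpleGraph (NC n) where
  Adj x y := x ⋖ y ∨ y ⋖ x
  symm := ⟨fun _ _ h => h.symm⟩
  loopless := ⟨fun x h => lt_irrefl x (h.elim CovBy.lt CovBy.lt)⟩

/-- An interval partition: every block is an interval of consecutive elements. -/
def IsIntervalPartition {n : ℕ} (s : Setoid (Fin n)) : Prop :=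
  ∀ a b c : Fin n, a ≤ b → b ≤ c → s.r a c → s.r a b

/-- A cyclic shift of an interval partition: for some shift `k`, pulling the
partition back along `i ↦ i + k` yields an interval partition. -/
def IsCyclicIntervalPartition {n : ℕ} (s : Setoid (Fin n)) : Prop :=
  ∃ k : Fin n, IsIntervalPartition (Setoid.comap (fun i => i + k) s)

open Relation

section PairSetoid
variable {α : Type*}

/-- The setoid relating `a` and `b` only. -/
def pairS (a b : α) : Setoid α :=
  ⟨fun u v => u = v ∨ (u = a ∧ v = b) ∨ (u = b ∧ v = a),
   ⟨fun _ => Or.inl rfl,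
    by rintro x y (rfl | ⟨rfl, rfl⟩ | ⟨rfl, rfl⟩) <;> tauto,
    by
      intro x y z h1 h2
      rcases h1 with rfl | ⟨h1a, h1b⟩ | ⟨h1a, h1b⟩ <;>
        rcases h2 with rfl | ⟨h2a, h2b⟩ | ⟨h2a, h2b⟩ <;> subst_vars <;> tauto⟩⟩

lemma pairS_rel_ab (a b : α) : (pairS a b) a b := Or.inr (Or.inl ⟨rfl, rfl⟩)

/-- The join of two setoids is the reflexive-transitive closure of the union. -/
lemma sup_rel (s t : Setoid α) (x y : α) :
    (s ⊔ t) x y ↔ ReflTransGen (fun u v => s u v ∨ t u v) x y := by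
  set step : α → α → Prop := fun u v => s u v ∨ t u v with hstep
  have hsymm : Symmetric step := by
    rintro u v (h | h)
    · exact Or.inl (s.symm' h)
    · exact Or.inr (t.symm' h)
  set J : Setoid α := ⟨ReflTransGen step,
    ⟨fun _ => ReflTransGen.refl, fun h => by haveI : Std.Symm step := ⟨fun a b h => hsymm h⟩; exact Std.Symm.symm _ _ h,
     fun h1 h2 => h1.trans h2⟩⟩ with hJ
  have heq : s ⊔ t = J := by
    apply le_antisymm
    · apply sup_le
      · intro u v h; exact ReflTransGen.single (Or.inl h)
      · intro u v h; exact ReflTransGen.single (Or.inr h)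
    · intro u v h
      induction h with
      | refl => exact (s ⊔ t).refl' _
      | tail _ hst ih =>
        refine (s ⊔ t).trans' ih ?_
        rcases hst with h | h
        · exact (le_sup_left : s ≤ s ⊔ t) h
        · exact (le_sup_right : t ≤ s ⊔ t) h
  rw [heq]; rfl

/-- Explicit description of the join with a pair setoid. -/
lemma sup_pairS_rel (s : Setoid α) (a b : α) (u v : α) :
    (s ⊔ pairS a b) u v ↔ s u v ∨ (s u a ∧ s b v) ∨ (s u b ∧ s a v) := by
  constructor
  · intro h
    rw [sup_rel] at h
    induction h with
    | refl => exact Or.inl (s.refl' _)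
    | @tail m f _ hst ih =>
      rcases hst with h | (rfl | ⟨rfl, rfl⟩ | ⟨rfl, rfl⟩)
      · rcases ih with h1 | ⟨h1, h2⟩ | ⟨h1, h2⟩
        · exact Or.inl (s.trans' h1 h)
        · exact Or.inr (Or.inl ⟨h1, s.trans' h2 h⟩)
        · exact Or.inr (Or.inr ⟨h1, s.trans' h2 h⟩)
      · exact ih
      · rcases ih with h1 | ⟨h1, h2⟩ | ⟨h1, h2⟩
        · exact Or.inr (Or.inl ⟨h1, s.refl' _⟩)
        · exact Or.inl (s.trans' h1 (s.symm' h2))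
        · exact Or.inl h1
      · rcases ih with h1 | ⟨h1, h2⟩ | ⟨h1, h2⟩
        · exact Or.inr (Or.inr ⟨h1, s.refl' _⟩)
        · exact Or.inl h1
        · exact Or.inl (s.trans' h1 (s.symm' h2))
  · rintro (h | ⟨h1, h2⟩ | ⟨h1, h2⟩)
    · exact (le_sup_left : s ≤ s ⊔ pairS a b) h
    · refine (s ⊔ pairS a b).trans' ((le_sup_left : s ≤ _) h1) ?_
      refine (s ⊔ pairS a b).trans' ((le_sup_right : pairS a b ≤ _) (pairS_rel_ab a b)) ?_
      exact (le_sup_left : s ≤ _) h2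
    · refine (s ⊔ pairS a b).trans' ((le_sup_left : s ≤ _) h1) ?_
      refine (s ⊔ pairS a b).trans' ((le_sup_right : pairS a b ≤ _)
        ((pairS a b).symm' (pairS_rel_ab a b))) ?_
      exact (le_sup_left : s ≤ _) h2

end PairSetoid

section Blocks
variable {n : ℕ}

/-- The canonical surjection between quotients. -/
noncomputable def qmap {s t : Setoid (Fin n)} (h : s ≤ t) : Quotient s → Quotient t :=
  Quotient.lift (fun a => (Quotient.mk t a)) (fun _ _ hab => Quotient.sound (h hab))

lemma qmap_mk {s t : Setoid (Fin n)} (h : s ≤ t) (a : Fin n) :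
    qmap h (Quotient.mk s a) = Quotient.mk t a := rfl

lemma qmap_surj {s t : Setoid (Fin n)} (h : s ≤ t) : Function.Surjective (qmap h) := by
  intro q
  induction q using Quotient.ind with
  | _ a => exact ⟨Quotient.mk s a, rfl⟩

lemma blocks_antitone {s t : Setoid (Fin n)} (h : s ≤ t) : blocks t ≤ blocks s := by
  haveI : Finite (Quotient s) := Quotient.finite s
  exact Nat.card_le_card_of_surjective (qmap h) (qmap_surj h)

lemma eq_of_le_of_blocks_le {s t : Setoid (Fin n)} (h : s ≤ t) (hb : blocks s ≤ blocks t) :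
    s = t := by
  haveI : Finite (Quotient s) := Quotient.finite s
  haveI : Finite (Quotient t) := Quotient.finite t
  haveI := Fintype.ofFinite (Quotient s)
  haveI := Fintype.ofFinite (Quotient t)
  have hcard : Fintype.card (Quotient s) = Fintype.card (Quotient t) := by
    have h1 : blocks t ≤ blocks s := blocks_antitone h
    have : blocks s = blocks t := le_antisymm hb h1
    simpa [blocks, Nat.card_eq_fintype_card] using this
  have hbij : Function.Bijective (qmap h) :=
    (Fintype.bijective_iff_surjective_and_card (qmap h)).2 ⟨qmap_surj h, hcard⟩
  apply le_antisymm h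
  intro x y hxy
  have : (Quotient.mk s x) = Quotient.mk s y := by
    apply hbij.1
    rw [qmap_mk, qmap_mk]
    exact Quotient.sound hxy
  exact Quotient.exact this

lemma blocks_lt_of_lt {s t : Setoid (Fin n)} (h : s < t) : blocks t < blocks s := by
  rcases lt_or_ge (blocks t) (blocks s) with h1 | h1
  · exact h1
  · exact absurd (eq_of_le_of_blocks_le h.le h1) h.ne

/-- Merging (at most) two classes drops the block count by at most one. -/
lemma blocks_le_sup_pairS (s : Setoid (Fin n)) (a b : Fin n) :
    blocks s ≤ blocks (s ⊔ pairS a b) + 1 := by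
  classical
  set m := s ⊔ pairS a b with hm
  haveI : Finite (Quotient m) := Quotient.finite m
  have hle : s ≤ m := le_sup_left
  set f : Quotient s → Option (Quotient m) :=
    fun q => if q = Quotient.mk s b then none else some (qmap hle q) with hf
  have hinj : Function.Injective f := by
    intro q1 q2 hq
    induction q1 using Quotient.ind with
    | _ u =>
    induction q2 using Quotient.ind with
    | _ v =>
    by_cases h1 : Quotient.mk s u = Quotient.mk s b <;>
      by_cases h2 : Quotient.mk s v = Quotient.mk s b
    · rw [h1, h2]
    · simp only [hf, h1, h2, if_pos, if_neg, if_true] at hq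
      · exact absurd hq (by simp)
    · simp only [hf, h1, h2] at hq
      · exact absurd hq (by simp)
    · simp only [hf, h1, h2, if_neg, not_false_iff] at hq
      have : qmap hle (Quotient.mk s u) = qmap hle (Quotient.mk s v) := by
        simpa using hq
      rw [qmap_mk, qmap_mk] at this
      have hrel : m u v := Quotient.exact this
      rcases (sup_pairS_rel s a b u v).mp hrel with h3 | ⟨h3, h4⟩ | ⟨h3, h4⟩
      · exact Quotient.sound h3
      · exact absurd (Quotient.sound (s.symm' h4) : Quotient.mk s v = Quotient.mk s b) h2
      · exact absurd (Quotient.sound h3 : Quotient.mk s u = Quotient.mk s b) h1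
  calc blocks s ≤ Nat.card (Option (Quotient m)) := Nat.card_le_card_of_injective f hinj
    _ = blocks m + 1 := Finite.card_option

end Blocks

section NCLemma
variable {α : Type*} [LinearOrder α] {R : α → α → Prop}

lemma crossPoint (hsym : Symmetric R) {x y z : α} (h : ReflTransGen R x y) :
    (x < z ∧ z < y ∨ y < z ∧ z < x) → ¬ ReflTransGen R x z →
    ∃ p q, R p q ∧ ReflTransGen R x p ∧ ReflTransGen R x q ∧ p < z ∧ z < q := by
  induction h using ReflTransGen.head_induction_on with
  | refl =>
    rintro (⟨h1, h2⟩ | ⟨h1, h2⟩) _ <;> exact absurd (h1.trans h2) (lt_irrefl _)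
  | head hac hcb ih =>
    rename_i a c
    intro hz hnz
    rcases eq_or_ne z c with rfl | hne
    · exact absurd (ReflTransGen.single hac) hnz
    by_cases hc : c < z ∧ z < y ∨ y < z ∧ z < c
    · have hnz' : ¬ ReflTransGen R c z := fun h => hnz ((ReflTransGen.single hac).trans h)
      obtain ⟨p, q, h1, h2, h3, h4, h5⟩ := ih hc hnz'
      exact ⟨p, q, h1, (ReflTransGen.single hac).trans h2,
        (ReflTransGen.single hac).trans h3, h4, h5⟩
    · push_neg at hc
      rcases hz with ⟨h1, h2⟩ | ⟨h1, h2⟩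
      · have hzc : z < c := by
          rcases lt_trichotomy z c with h | h | h
          · exact h
          · exact absurd h hne
          · exact absurd (hc.1 h) (not_le.2 h2)
        exact ⟨a, c, hac, ReflTransGen.refl, ReflTransGen.single hac, h1, hzc⟩
      · have hcz : c < z := by
          rcases lt_trichotomy c z with h | h | h
          · exact h
          · exact absurd h.symm hne
          · exact absurd (hc.2 h1) (not_le.2 h)
        exact ⟨c, a, hsym hac, ReflTransGen.single hac, ReflTransGen.refl, hcz, h2⟩

lemma exitLemma {x y u v : α} (h : ReflTransGen R x y) :
    u < x → x < v → ¬(u < y ∧ y < v) →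
    ∃ p q, R p q ∧ ReflTransGen R x p ∧ u < p ∧ p < v ∧ ¬(u < q ∧ q < v) := by
  induction h using ReflTransGen.head_induction_on with
  | refl => intro h1 h2 h3; exact absurd ⟨h1, h2⟩ h3
  | head hac hcb ih =>
    rename_i a c
    intro h1 h2 h3
    by_cases hc : u < c ∧ c < v
    · obtain ⟨p, q, g1, g2, g3, g4, g5⟩ := ih hc.1 hc.2 h3
      exact ⟨p, q, g1, (ReflTransGen.single hac).trans g2, g3, g4, g5⟩
    · exact ⟨a, c, hac, ReflTransGen.refl, h1, h2, hc⟩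

/-- Components of a "noncrossing-up-to-connection" symmetric relation form a
noncrossing partition. -/
lemma components_noncrossing (hsym : Symmetric R)
    (hnc : ∀ a b c d : α, a < b → b < c → c < d → R a c → R b d → ReflTransGen R a b)
    {a b c d : α} (hab : a < b) (hbc : b < c) (hcd : c < d)
    (hac : ReflTransGen R a c) (hbd : ReflTransGen R b d) : ReflTransGen R a b := by
  by_contra hnab
  have hEsymm : Symmetric (ReflTransGen R) := by
    haveI : Std.Symm R := ⟨fun a b h => hsym h⟩; exact fun x y h => Std.Symm.symm x y h
  have link : ∀ x, ReflTransGen R a x → ReflTransGen R b x → False :=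
    fun x h1 h2 => hnab (h1.trans (hEsymm h2))
  have hnbc : ¬ ReflTransGen R b c := fun h => link c hac h
  obtain ⟨u, v, huv, hau, hav, hub, hbv⟩ := crossPoint hsym hac (Or.inl ⟨hab, hbc⟩) hnab
  obtain ⟨w, t, hwt, hbw, hbt, hwc, hct⟩ := crossPoint hsym hbd (Or.inl ⟨hbc, hcd⟩) hnbc
  rcases lt_trichotomy u w with huw | heq | hwu
  · have hcu : ReflTransGen R c u := (hEsymm hac).trans hau
    obtain ⟨p, q, hpq, hcp, hwp, hpt, hq⟩ :=
      exitLemma hcu hwc hct (fun hh => absurd huw (not_lt.2 hh.1.le))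
    have hcq : ReflTransGen R c q := hcp.trans (ReflTransGen.single hpq)
    have hfin : ReflTransGen R c w → False := fun h => hnbc (hbw.trans (hEsymm h))
    rcases lt_trichotomy q w with hq1 | rfl | hq2
    · exact hfin (hcq.trans (hnc q w p t hq1 hwp hpt (hsym hpq) hwt))
    · exact hfin hcq
    · rcases lt_trichotomy q t with hq3 | rfl | hq4
      · exact absurd ⟨hq2, hq3⟩ hq
      · exact hnbc (hbt.trans (hEsymm hcq))
      · exact hfin (hcp.trans (hEsymm (hnc w p t q hwp hpt hq4 hwt hpq)))
  · exact link u hau (heq ▸ hbw)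
  · rcases lt_trichotomy v t with hvt | rfl | htv
    · obtain ⟨p, q, hpq, hbp, hup, hpv, hq⟩ :=
        exitLemma hbw hub hbv (fun hh => absurd hwu (not_lt.2 hh.1.le))
      have hbq : ReflTransGen R b q := hbp.trans (ReflTransGen.single hpq)
      rcases lt_trichotomy q u with hq1 | rfl | hq2
      · exact link u hau (hbq.trans (hnc q u p v hq1 hup hpv (hsym hpq) huv))
      · exact link _ hau hbq
      · rcases lt_trichotomy q v with hq3 | rfl | hq4
        · exact absurd ⟨hq2, hq3⟩ hq
        · exact link _ hav hbq
        · exact link u hau (hbp.trans (hEsymm (hnc u p v q hup hpv hq4 huv hpq)))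
    · exact link v hav hbt
    · have hut : u < t := hub.trans (hbc.trans hct)
      exact link u hau (hbw.trans (hnc w u t v hwu hut htv hwt huv))
end NCLemma

section Rot
variable {n : ℕ}

lemma fin_sub_val [NeZero n] (a k : Fin n) :
    (a - k).val = if k.val ≤ a.val then a.val - k.val else a.val + n - k.val := by
  rw [Fin.sub_def]
  simp only
  split_ifs with h
  · have h1 : n - k.val + a.val = (a.val - k.val) + n := by omega
    rw [h1, Nat.add_mod_right, Nat.mod_eq_of_lt (by omega)]
  · have h2 : n - k.val + a.val = a.val + n - k.val := by omega
    rw [h2, Nat.mod_eq_of_lt (by omega)]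

lemma comap_rel (k : Fin n) (s : Setoid (Fin n)) (u v : Fin n) :
    (Setoid.comap (fun i => i + k) s) u v ↔ s (u + k) (v + k) := Iff.rfl

/-- Structure of classes of a cyclic-interval partition. -/
lemma cyclic_interval_cases {π : Setoid (Fin n)} (hπ : IsCyclicIntervalPartition π)
    {a c : Fin n} (hle : a ≤ c) (hac : π a c) :
    (∀ z, a ≤ z → z ≤ c → π a z) ∨ (∀ z, z ≤ a ∨ c ≤ z → π a z) := by
  obtain ⟨k, hk⟩ := hπ
  haveI : NeZero n := ⟨(Fin.pos k).ne'⟩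
  have hsub : ∀ x : Fin n, (x - k) + k = x := fun x => sub_add_cancel x k
  have hs' : (Setoid.comap (fun i => i + k) π) (a - k) (c - k) := by
    rw [comap_rel, hsub, hsub]; exact hac
  have hkn : k.val < n := k.isLt
  rcases le_or_gt (a - k) (c - k) with h1 | h1
  · left
    intro z hz1 hz2
    have h2 : (a - k) ≤ (z - k) ∧ (z - k) ≤ (c - k) := by
      rw [Fin.le_def, Fin.le_def] at *
      rw [fin_sub_val, fin_sub_val, fin_sub_val] at *
      have ha := a.isLt; have hc := c.isLt; have hz := z.isLt
      constructor <;> (split_ifs at * <;> omega)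
    have h3 := hk (a - k) (z - k) (c - k) h2.1 h2.2 hs'
    rw [comap_rel, hsub, hsub] at h3
    exact h3
  · right
    intro z hz
    have h2 : (c - k) ≤ (z - k) ∧ (z - k) ≤ (a - k) := by
      rw [Fin.le_def, Fin.le_def] at *
      rw [Fin.lt_def] at h1
      rw [fin_sub_val, fin_sub_val, fin_sub_val] at *
      have ha := a.isLt; have hc := c.isLt; have hz := z.isLt
      constructor <;> (split_ifs at * <;> omega)
    have h3 := hk (c - k) (z - k) (a - k) h2.1 h2.2 (Setoid.symm' _ hs')
    rw [comap_rel, hsub, hsub] at h3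
    exact π.trans' hac h3
end Rot

section Join
variable {n : ℕ}

/-- The join of a cyclic-interval partition with a noncrossing partition is
noncrossing. -/
lemma join_noncrossing {π ρ : Setoid (Fin n)} (hπ : IsCyclicIntervalPartition π)
    (hρ : IsNoncrossing ρ) : IsNoncrossing (π ⊔ ρ) := by
  intro a b c d hab hbc hcd hac hbd
  have hsym : Symmetric (fun u v : Fin n => π u v ∨ ρ u v) := by
    rintro u v (h | h)
    · exact Or.inl (π.symm' h)
    · exact Or.inr (ρ.symm' h)
  have hac' := (sup_rel π ρ a c).mp hac
  have hbd' := (sup_rel π ρ b d).mp hbd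
  refine (sup_rel π ρ a b).mpr (components_noncrossing hsym ?_ hab hbc hcd hac' hbd')
  intro p q r s hpq hqr hrs hpr hqs
  rcases hpr with h1 | h1
  · rcases cyclic_interval_cases hπ (le_of_lt (hpq.trans hqr)) h1 with hL | hR
    · exact ReflTransGen.single (Or.inl (hL q hpq.le hqr.le))
    · have hps : π p s := hR s (Or.inr (hrs.le))
      rcases hqs with h2 | h2
      · exact ReflTransGen.single (Or.inl (π.trans' hps (π.symm' h2)))
      · have s1 : ReflTransGen (fun u v => π u v ∨ ρ u v) p s :=
          ReflTransGen.single (Or.inl hps)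
        exact s1.tail (Or.inr (ρ.symm' h2))
  · rcases hqs with h2 | h2
    · rcases cyclic_interval_cases hπ (le_of_lt (hqr.trans hrs)) h2 with hL | hR
      · have s2 : ReflTransGen (fun u v => π u v ∨ ρ u v) p r :=
          ReflTransGen.single (Or.inr h1)
        exact s2.tail (Or.inl (π.symm' (hL r hqr.le hrs.le)))
      · exact ReflTransGen.single (Or.inl (π.symm' (hR p (Or.inl hpq.le))))
    · exact ReflTransGen.single (Or.inr (hρ p q r s hpq hqr hrs h1 h2))

end Join

section Cover
variable {n : ℕ}

lemma nc_le_iff {x y : NC n} : x ≤ y ↔ x.1 ≤ y.1 := Iff.rfl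
lemma nc_lt_iff {x y : NC n} : x < y ↔ x.1 < y.1 := Subtype.coe_lt_coe.symm

/-- For `x < y` in `NC n` there is a covering step above `x` below `y`. -/
lemma cover_exists {x y : NC n} (hxy : x < y) :
    ∃ z : NC n, x ⋖ z ∧ z ≤ y ∧ blocks x.1 = blocks z.1 + 1 := by
  classical
  have hxy1 : x.1 < y.1 := nc_lt_iff.mp hxy
  -- a pair related in y but not in x, with minimal gap
  have hP : ∃ g : ℕ, ∃ a b : Fin n, a < b ∧ y.1 a b ∧ ¬ x.1 a b ∧ b.val - a.val = g := by
    have h2 : ¬ (y.1 ≤ x.1) := fun h => absurd (le_antisymm hxy1.le h) hxy1.ne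
    rw [Setoid.le_def] at h2
    push_neg at h2
    obtain ⟨u, v, h3, h4⟩ := h2
    have hne : u ≠ v := fun h => h4 (h ▸ x.1.refl' u)
    rcases lt_or_gt_of_ne hne with h5 | h5
    · exact ⟨v.val - u.val, u, v, h5, h3, h4, rfl⟩
    · exact ⟨u.val - v.val, v, u, h5, y.1.symm' h3,
        fun h => h4 (x.1.symm' h), rfl⟩
  obtain ⟨a, b, hab, hyab, hxab, hgap⟩ := Nat.find_spec hP
  set g := Nat.find hP with hg
  -- minimality consequence
  have hmin : ∀ a' b' : Fin n, a' < b' → y.1 a' b' → b'.val - a'.val < g → x.1 a' b' := by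
    intro a' b' h1 h2 h3
    by_contra h4
    exact absurd (Nat.find_min hP h3 : ¬ _) (by push_neg; exact ⟨a', b', h1, h2, h4, rfl⟩)
  -- (★): no element strictly between a and b is y-related to a
  have hstar : ∀ z, a < z → z < b → ¬ y.1 a z := by
    intro z h1 h2 hyaz
    have g1 : x.1 a z := hmin a z h1 hyaz (by
      rw [Fin.lt_def] at h1 h2 hab; omega)
    have g2 : x.1 z b := hmin z b h2 (y.1.trans' (y.1.symm' hyaz) hyab) (by
      rw [Fin.lt_def] at h1 h2 hab; omega)
    exact hxab (x.1.trans' g1 g2)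
  -- (★★): an x-class with a point strictly inside (a,b) is contained in (a,b)
  have hstar2 : ∀ u v, x.1 u v → a < u → u < b → a < v ∧ v < b := by
    intro u v hx h1 h2
    have hyuv : y.1 u v := hxy1.le hx
    rcases lt_trichotomy v a with hv | rfl | hv
    · -- v < a < u < b
      have := y.2 v a u b hv h1 h2 (y.1.symm' hyuv) hyab
      exact absurd (y.1.trans' (y.1.symm' this) (y.1.symm' hyuv)) (hstar u h1 h2)
    · exact absurd (y.1.symm' hyuv) (hstar u h1 h2)
    · rcases lt_trichotomy v b with hv2 | rfl | hv2
      · exact ⟨hv, hv2⟩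
      · exact absurd (y.1.trans' hyab (y.1.symm' hyuv)) (hstar u h1 h2)
      · -- a < u < b < v
        have := y.2 a u b v h1 h2 hv2 hyab hyuv
        exact absurd this (hstar u h1 h2)
  -- the merged partition is noncrossing
  have hznc : IsNoncrossing (x.1 ⊔ pairS a b) := by
    intro p q r s hpq hqr hrs hpr hqs
    have hsym : Symmetric (fun u v : Fin n => x.1 u v ∨ (pairS a b) u v) := by
      rintro u v (h | h)
      · exact Or.inl (x.1.symm' h)
      · exact Or.inr ((pairS a b).symm' h)
    have hpr' := (sup_rel x.1 (pairS a b) p r).mp hpr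
    have hqs' := (sup_rel x.1 (pairS a b) q s).mp hqs
    refine (sup_rel x.1 (pairS a b) p q).mpr
      (components_noncrossing hsym ?_ hpq hqr hrs hpr' hqs')
    intro p' q' r' s' h1 h2 h3 h4 h5
    rcases h4 with h4 | h4
    · rcases h5 with h5 | h5
      · exact ReflTransGen.single (Or.inl (x.2 p' q' r' s' h1 h2 h3 h4 h5))
      · rcases h5 with rfl | ⟨rfl, rfl⟩ | ⟨rfl, rfl⟩
        · exact absurd rfl (ne_of_lt (h2.trans h3))
        · -- q' = a, s' = b, r' strictly inside (a,b)
          have := hstar2 r' p' (x.1.symm' h4) h2 h3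
          exact absurd h1 (not_lt.2 this.1.le)
        · exact absurd (h2.trans h3) (not_lt.2 hab.le)
    · rcases h4 with rfl | ⟨rfl, rfl⟩ | ⟨rfl, rfl⟩
      · exact absurd rfl (ne_of_lt (h1.trans h2))
      · -- p' = a, r' = b, q' strictly inside (a,b)
        rcases h5 with h5 | h5
        · have := hstar2 q' s' h5 h1 h2
          exact absurd h3 (not_lt.2 this.2.le)
        · rcases h5 with rfl | ⟨rfl, rfl⟩ | ⟨rfl, rfl⟩
          · exact absurd rfl (ne_of_lt (h2.trans h3))
          · exact absurd h1 (lt_irrefl _)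
          · exact absurd h2 (lt_irrefl _)
      · exact absurd (h1.trans h2) (not_lt.2 hab.le)
  set z : NC n := ⟨x.1 ⊔ pairS a b, hznc⟩ with hzdef
  have hxz : x < z := by
    rw [nc_lt_iff]
    constructor
    · exact le_sup_left
    · intro h
      exact hxab (h ((sup_pairS_rel x.1 a b a b).mpr
        (Or.inr (Or.inl ⟨x.1.refl' a, x.1.refl' b⟩))))
  have hzy : z ≤ y := by
    rw [nc_le_iff]
    apply sup_le hxy1.le
    rintro u v (rfl | ⟨rfl, rfl⟩ | ⟨rfl, rfl⟩)
    · exact y.1.refl' _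
    · exact hyab
    · exact y.1.symm' hyab
  have hblocks : blocks x.1 = blocks z.1 + 1 := by
    have h1 : blocks z.1 < blocks x.1 := blocks_lt_of_lt (nc_lt_iff.mp hxz)
    have h2 : blocks x.1 ≤ blocks z.1 + 1 := blocks_le_sup_pairS x.1 a b
    omega
  refine ⟨z, ⟨hxz, ?_⟩, hzy, hblocks⟩
  intro w hw1 hw2
  have g1 : blocks z.1 < blocks w.1 := blocks_lt_of_lt (nc_lt_iff.mp hw2)
  have g2 : blocks w.1 < blocks x.1 := blocks_lt_of_lt (nc_lt_iff.mp hw1)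
  omega

lemma cover_blocks {x y : NC n} (h : x ⋖ y) : blocks x.1 = blocks y.1 + 1 := by
  obtain ⟨z, hz1, hz2, hz3⟩ := cover_exists h.lt
  rcases eq_or_lt_of_le hz2 with rfl | hlt
  · exact hz3
  · exact absurd hlt (h.2 hz1.lt)

/-- Semimodularity-type inequality across a covering step. -/
lemma blocks_sup_cover {s t : Setoid (Fin n)} (hle : s ≤ t)
    (hb : blocks s = blocks t + 1) (ρ : Setoid (Fin n)) :
    blocks (s ⊔ ρ) ≤ blocks (t ⊔ ρ) + 1 := by
  have hlt : s < t := lt_of_le_of_ne hle (fun h => by rw [h] at hb; omega)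
  have h2 : ¬ (t ≤ s) := fun h => absurd (le_antisymm hle h) hlt.ne
  rw [Setoid.le_def] at h2
  push_neg at h2
  obtain ⟨a, b, h3, h4⟩ := h2
  have hm : s ⊔ pairS a b ≤ t := by
    apply sup_le hle
    rintro u v (rfl | ⟨rfl, rfl⟩ | ⟨rfl, rfl⟩)
    · exact t.refl' _
    · exact h3
    · exact t.symm' h3
  have hmlt : s < s ⊔ pairS a b := by
    refine lt_of_le_of_ne le_sup_left (fun h => h4 ?_)
    have hrel : (s ⊔ pairS a b) a b :=
      (sup_pairS_rel s a b a b).mpr (Or.inr (Or.inl ⟨s.refl' a, s.refl' b⟩))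
    rw [← h] at hrel
    exact hrel
  have heq : s ⊔ pairS a b = t := by
    apply eq_of_le_of_blocks_le hm
    have g1 : blocks (s ⊔ pairS a b) < blocks s := blocks_lt_of_lt hmlt
    have g2 : blocks s ≤ blocks (s ⊔ pairS a b) + 1 := blocks_le_sup_pairS s a b
    omega
  have : t ⊔ ρ = (s ⊔ ρ) ⊔ pairS a b := by
    rw [← heq, sup_right_comm]
  rw [this]
  exact blocks_le_sup_pairS (s ⊔ ρ) a b

end Cover

section Walks
variable {n : ℕ}

/-- Upper bound: a walk in the Hasse diagram from `x` up to `y`. -/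
lemma walk_ub : ∀ (k : ℕ) (x y : NC n), blocks x.1 ≤ k → x ≤ y →
    ∃ w : (hasse n).Walk x y, w.length + blocks y.1 = blocks x.1 := by
  intro k
  induction k with
  | zero =>
    intro x y hb hxy
    rcases eq_or_lt_of_le hxy with rfl | hlt
    · exact ⟨SimpleGraph.Walk.nil, by simp⟩
    · obtain ⟨z, hz1, _, hz3⟩ := cover_exists hlt
      omega
  | succ k ih =>
    intro x y hb hxy
    rcases eq_or_lt_of_le hxy with rfl | hlt
    · exact ⟨SimpleGraph.Walk.nil, by simp⟩
    · obtain ⟨z, hz1, hz2, hz3⟩ := cover_exists hlt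
      obtain ⟨w, hw⟩ := ih z y (by omega) hz2
      refine ⟨SimpleGraph.Walk.cons (show (hasse n).Adj x z from Or.inl hz1) w, ?_⟩
      simp only [SimpleGraph.Walk.length_cons]
      omega

/-- The potential function used for the lower bound. -/
noncomputable def pot (ρ0 : Setoid (Fin n)) (x : NC n) : ℤ :=
  (blocks x.1 : ℤ) - 2 * blocks (x.1 ⊔ ρ0)

/-- The potential function bound along an edge of the Hasse diagram. -/
lemma edge_bound (ρ0 : Setoid (Fin n)) {x z : NC n} (h : (hasse n).Adj x z) :
    |pot ρ0 x - pot ρ0 z| ≤ 1 := by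
  have key : ∀ u v : NC n, u ⋖ v → |pot ρ0 u - pot ρ0 v| ≤ 1 := by
    intro u v hc
    have h1 : blocks u.1 = blocks v.1 + 1 := cover_blocks hc
    have h2 : blocks (u.1 ⊔ ρ0) ≤ blocks (v.1 ⊔ ρ0) + 1 :=
      blocks_sup_cover (nc_lt_iff.mp hc.lt).le h1 ρ0
    have h3 : blocks (v.1 ⊔ ρ0) ≤ blocks (u.1 ⊔ ρ0) :=
      blocks_antitone (sup_le_sup_right (nc_lt_iff.mp hc.lt).le ρ0)
    rw [pot, pot, abs_le]
    constructor <;> push_cast <;> omega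
  change x ⋖ z ∨ z ⋖ x at h
  rcases h with h | h
  · exact key x z h
  · rw [abs_sub_comm]; exact key z x h

/-- Lower bound along any walk. -/
lemma walk_lb (ρ0 : Setoid (Fin n)) {x y : NC n} (w : (hasse n).Walk x y) :
    |pot ρ0 x - pot ρ0 y| ≤ w.length := by
  induction w with
  | nil => simp
  | @cons u v z h p ih =>
    have tri := abs_sub_le (pot ρ0 u) (pot ρ0 v) (pot ρ0 z)
    have h2 := add_le_add (edge_bound ρ0 h) ih
    simp only [SimpleGraph.Walk.length_cons]
    push_cast
    linarith

end Walks

/-- For `π` a cyclic-interval partition and `ρ ∈ NC(n)`: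
`d_H(π,ρ) = |π| + |ρ| - 2·|π ∨ ρ|` where `∨` is the join in `NC(n)` (stated
additively, `j` being the join of `π` and `ρ` in `NC n`). -/
theorem dist_cyclicInterval (n : ℕ) (π ρ : NC n)
    (hπ : IsCyclicIntervalPartition π.1) (j : NC n) (hj : IsLUB {π, ρ} j) :
    (hasse n).dist π ρ + 2 * blocks j.1 = blocks π.1 + blocks ρ.1 := by
  classical
  have hSnc : IsNoncrossing (π.1 ⊔ ρ.1) := join_noncrossing hπ ρ.2
  set S : NC n := ⟨π.1 ⊔ ρ.1, hSnc⟩ with hS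
  have hπj : π ≤ j := hj.1 (by left; rfl)
  have hρj : ρ ≤ j := hj.1 (by right; rfl)
  have hjS : j ≤ S := by
    apply hj.2
    rintro w (rfl | rfl)
    · exact (le_sup_left : w.1 ≤ w.1 ⊔ ρ.1)
    · exact (le_sup_right : w.1 ≤ π.1 ⊔ w.1)
  have hSj : S ≤ j := by
    rw [nc_le_iff]
    exact sup_le hπj hρj
  have hjeq : j = S := le_antisymm hjS hSj
  have hjrel : j.1 = π.1 ⊔ ρ.1 := by rw [hjeq]
  -- upper bound
  obtain ⟨w1, hw1⟩ := walk_ub (blocks π.1) π j (le_refl _) hπj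
  obtain ⟨w2, hw2⟩ := walk_ub (blocks ρ.1) ρ j (le_refl _) hρj
  have hdle : (hasse n).dist π ρ ≤ w1.length + w2.length := by
    have := SimpleGraph.dist_le (w1.append w2.reverse)
    simpa [SimpleGraph.Walk.length_append, SimpleGraph.Walk.length_reverse] using this
  -- lower bound
  have hreach : (hasse n).Reachable π ρ := ⟨w1.append w2.reverse⟩
  obtain ⟨w0, hw0⟩ := hreach.exists_walk_length_eq_dist
  have hlb := walk_lb ρ.1 w0
  rw [hw0] at hlb
  have hρρ : ρ.1 ⊔ ρ.1 = ρ.1 := sup_idem ρ.1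
  rw [pot, pot, hρρ, ← hjrel] at hlb
  -- blocks inequalities
  have hbπ : blocks j.1 ≤ blocks π.1 := blocks_antitone hπj
  have hbρ : blocks j.1 ≤ blocks ρ.1 := blocks_antitone hρj
  rw [abs_le] at hlb
  have hlb2 := hlb.2
  omega
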